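/- The map F_udps, regarded as a map from the class of div point sets with at least 4 points to the class of unit div point sets, is not surjective: there exists a unit div point set that is not equal to F_udps(X) for any div point set X with at least 4 points (Lemma 1, non-surjectivity). -/

import Mathlib

open Finset

/-- A (unit) dividon: an ordered pair of a divider and a set of divs. -/
abbrev Dividon : Type := Finset ℕ × Finset (Finset ℕ)

/-- A candidate (unit) div point set: a pair of a point set and a set of dividons. -/
abbrev PreDPS : Type := Finset ℕ × Finset Dividon

/-- The union `⋃δ` of a set of divs. -/
def unionOf (δ : Finset (Finset ℕ)) : Finset ℕ := δ.sup id

/-- `ξ(D) = π₁(D) ∪ ⋃π₂(D)`. -/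
def xi (D : Dividon) : Finset ℕ := D.1 ∪ unionOf D.2

/-- `D = (d, δ)` is a dividon over the point set `P`. -/
def IsDividon (P : Finset ℕ) (D : Dividon) : Prop :=
  D.1.card = 2 ∧ D.1 ⊆ P ∧
    ∃ A B : Finset ℕ, A ≠ B ∧ D.2 = {A, B} ∧ A ∪ B = P \ D.1 ∧ A ∩ B = ∅

/-- `X` is a div point set. -/
def IsDPS (X : PreDPS) : Prop :=
  X.1.Nonempty ∧ X.2.card = Nat.choose X.1.card 2 ∧
    (∀ D ∈ X.2, IsDividon X.1 D) ∧
    ∀ D₁ ∈ X.2, ∀ D₂ ∈ X.2, D₁.1 = D₂.1 → D₁ = D₂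

/-- `φ(δ,T) = 1` if the two TBD points of `T` lie in the same div of `δ`,
`φ(δ,T) = 0` otherwise. -/
def phi (δ : Finset (Finset ℕ)) (T : Finset ℕ) : ℕ :=
  if ∃ dv ∈ δ, (T ∩ dv).card = 2 then 1 else 0

/-- `ψ(δ) = 1` if some div of `δ` has two elements, `ψ(δ) = 0` otherwise. -/
def psi (δ : Finset (Finset ℕ)) : ℕ :=
  if ∃ dv ∈ δ, dv.card = 2 then 1 else 0

/-- Laws (L1), (L2), (L3) for div point sets. -/
def LawsDPS (X : PreDPS) : Prop :=
  (∀ R ⊆ X.1, R.card = 4 →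
    ∀ D₁ ∈ X.2, ∀ D₂ ∈ X.2, ∀ D₃ ∈ X.2,
      D₁.1 ∪ D₂.1 ∪ D₃.1 = R → (D₁.1 ∩ D₂.1 ∩ D₃.1).card = 1 →
      (phi D₁.2 (R \ D₁.1) = 0 ↔ phi D₂.2 (R \ D₂.1) = phi D₃.2 (R \ D₃.1))) ∧
  (∀ R ⊆ X.1, R.card = 4 →
    ∀ D₁ ∈ X.2, ∀ D₂ ∈ X.2, ∀ D₃ ∈ X.2,
      D₁.1 ∪ D₂.1 ∪ D₃.1 = R → (D₁.1 ∩ D₂.1 ∩ D₃.1).card = 1 →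
      (phi D₁.2 (R \ D₁.1) = 1 ↔ phi D₂.2 (R \ D₂.1) ≠ phi D₃.2 (R \ D₃.1))) ∧
  (∀ R ⊆ X.1, R.card = 4 →
    ∀ D₁ ∈ X.2, ∀ D₂ ∈ X.2, ∀ D₃ ∈ X.2,
      D₁ ≠ D₂ → D₁ ≠ D₃ → D₂ ≠ D₃ →
      D₁.1 ∪ D₂.1 ∪ D₃.1 ⊆ R → (D₁.1 ∪ D₂.1 ∪ D₃.1).card = 3 →
      phi D₁.2 (R \ D₁.1) = 0 → phi D₂.2 (R \ D₂.1) = 0 →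
      phi D₃.2 (R \ D₃.1) = 1)

/-- The class DPS⁺: div point sets satisfying (L1), (L2), (L3). -/
def DPSplus (X : PreDPS) : Prop := IsDPS X ∧ LawsDPS X

/-- `D = (d, δ)` is a unit dividon over the point set `P`. -/
def IsUnitDividon (P : Finset ℕ) (D : Dividon) : Prop :=
  D.1.card = 2 ∧ D.1 ⊆ P ∧
    ∃ A B : Finset ℕ, A ≠ B ∧ D.2 = {A, B} ∧ (A ∪ B).card = 2 ∧
      A ∪ B ⊆ P \ D.1 ∧ A ∩ B = ∅

/-- `U` is a unit div point set. -/
def IsUDPS (U : PreDPS) : Prop :=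
  U.1.Nonempty ∧
    U.2.card = Nat.choose U.1.card 2 * Nat.choose (U.1.card - 2) 2 ∧
    (∀ D ∈ U.2, IsUnitDividon U.1 D) ∧
    ∀ D₁ ∈ U.2, ∀ D₂ ∈ U.2,
      D₁.1 = D₂.1 → unionOf D₁.2 = unionOf D₂.2 → D₁ = D₂

/-- Laws (U1), (U2), (U3) for unit div point sets. -/
def LawsUDPS (U : PreDPS) : Prop :=
  (∀ R ⊆ U.1, R.card = 4 →
    ∀ D₁ ∈ U.2, ∀ D₂ ∈ U.2, ∀ D₃ ∈ U.2,
      D₁ ≠ D₂ → D₁ ≠ D₃ → D₂ ≠ D₃ →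
      xi D₁ = R → xi D₂ = R → xi D₃ = R →
      (D₁.1 ∩ D₂.1 ∩ D₃.1).card = 1 →
      (psi D₁.2 = 0 ↔ psi D₂.2 = psi D₃.2)) ∧
  (∀ R ⊆ U.1, R.card = 4 →
    ∀ D₁ ∈ U.2, ∀ D₂ ∈ U.2, ∀ D₃ ∈ U.2,
      D₁ ≠ D₂ → D₁ ≠ D₃ → D₂ ≠ D₃ →
      xi D₁ = R → xi D₂ = R → xi D₃ = R →
      (D₁.1 ∩ D₂.1 ∩ D₃.1).card = 1 →
      (psi D₁.2 = 1 ↔ psi D₂.2 ≠ psi D₃.2)) ∧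
  (∀ R ⊆ U.1, R.card = 4 →
    ∀ D₁ ∈ U.2, ∀ D₂ ∈ U.2, ∀ D₃ ∈ U.2,
      D₁ ≠ D₂ → D₁ ≠ D₃ → D₂ ≠ D₃ →
      xi D₁ = R → xi D₂ = R → xi D₃ = R →
      (D₁.1 ∪ D₂.1 ∪ D₃.1).card = 3 →
      psi D₁.2 = 0 → psi D₂.2 = 0 → psi D₃.2 = 1)

/-- The class UDPS⁺: unit div point sets satisfying (U1), (U2), (U3). -/
def UDPSplus (U : PreDPS) : Prop := IsUDPS U ∧ LawsUDPS U

/-- `F_udps`: breaks every dividon of a div point set into unit dividons,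
one for each 2-element subset `T = {a,b}` of the TBD points: the unit dividon is
`(d, {{a,b},∅})` if `a` and `b` lie in the same div, and `(d, {{a},{b}})` otherwise. -/
def Fudps (X : PreDPS) : PreDPS :=
  (X.1, X.2.biUnion fun D =>
    ((X.1 \ D.1).powersetCard 2).image fun T =>
      (D.1, if ∃ dv ∈ D.2, T ⊆ dv then ({T, ∅} : Finset (Finset ℕ))
            else T.image fun a => ({a} : Finset ℕ)))

/-- `Y` is the sub div point set of `X` on the point set `Ps` (where `4 ≤ |Ps|`):
the unique div point set with point set `Ps` whose image under `F_udps` has exactly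
the unit dividons `D` of `F_udps X` with `ξ(D) ⊆ Ps`. -/
def IsSdps (X : PreDPS) (Ps : Finset ℕ) (Y : PreDPS) : Prop :=
  Ps ⊆ X.1 ∧ 4 ≤ Ps.card ∧ IsDPS Y ∧ Y.1 = Ps ∧
    (Fudps Y).2 = (Fudps X).2.filter fun D => xi D ⊆ Ps

/-- Isomorphism of (candidate) div point sets. -/
def Isom (X Y : PreDPS) : Prop :=
  ∃ f : ℕ → ℕ, Set.BijOn f ↑X.1 ↑Y.1 ∧
    ∀ D ∈ X.2, (D.1.image f, D.2.image (Finset.image f)) ∈ Y.2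

/-- Isomorphism of sets of (unit) dividons. -/
def OmegaIsom (Ω₁ Ω₂ : Finset Dividon) : Prop :=
  Ω₁.card = Ω₂.card ∧
    ∃ f : ℕ → ℕ, Set.BijOn f ↑(Ω₁.sup xi) ↑(Ω₂.sup xi) ∧
      ∀ D ∈ Ω₁, (D.1.image f, D.2.image (Finset.image f)) ∈ Ω₂

/-- The div point set Conc₄¹. -/
def Conc41 : PreDPS :=
  ({1, 2, 3, 4},
   {({1, 2}, {{3}, {4}}), ({1, 3}, {{2}, {4}}), ({1, 4}, {{2}, {3}}),
    ({2, 3}, {{1, 4}, ∅}), ({2, 4}, {{1, 3}, ∅}), ({3, 4}, {{1, 2}, ∅})})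

/-- The div point set Conv₄. -/
def Conv4 : PreDPS :=
  ({1, 2, 3, 4},
   {({1, 2}, {{3, 4}, ∅}), ({1, 3}, {{2}, {4}}), ({1, 4}, {{2, 3}, ∅}),
    ({2, 3}, {{1, 4}, ∅}), ({2, 4}, {{1}, {3}}), ({3, 4}, {{1, 2}, ∅})})

/-- The div point set Conv_n on `{1, …, n}`: the dividon with divider `d = {i,j}`,
`i < j`, has divs `{p : i < p < j}` and `{p : p < i or p > j}`. -/
def ConvN (n : ℕ) : PreDPS :=
  (Finset.Icc 1 n,
   ((Finset.Icc 1 n).powersetCard 2).image fun d =>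
     (d, ({(Finset.Icc 1 n).filter fun p => (∃ i ∈ d, i < p) ∧ ∃ j ∈ d, p < j,
           (Finset.Icc 1 n).filter fun p =>
             (∀ i ∈ d, p < i) ∨ ∀ i ∈ d, i < p} : Finset (Finset ℕ))))

/-- Auxiliary: the target unit div point set on 5 points, all of whose unit
dividons are of the "different divs" (two singletons) type. -/
def U5 : PreDPS :=
  (Finset.Icc 1 5,
   ((Finset.Icc 1 5).powersetCard 2).biUnion fun d =>
     ((Finset.Icc 1 5 \ d).powersetCard 2).image fun T =>
       (d, T.image fun a => ({a} : Finset ℕ)))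

lemma unionOf_image_singleton (T : Finset ℕ) :
    unionOf (T.image fun a => ({a} : Finset ℕ)) = T := by
  unfold unionOf
  rw [Finset.sup_image]
  exact Finset.sup_singleton_eq_self T

lemma mem_U5_iff (D : Dividon) :
    D ∈ U5.2 ↔ ∃ d, d ⊆ Finset.Icc 1 5 ∧ d.card = 2 ∧
      ∃ T, T ⊆ Finset.Icc 1 5 \ d ∧ T.card = 2 ∧
        D = (d, T.image fun a => ({a} : Finset ℕ)) := by
  simp only [U5, Finset.mem_biUnion, Finset.mem_image, Finset.mem_powersetCard]
  constructor
  · rintro ⟨d, ⟨hd1, hd2⟩, T, ⟨hT1, hT2⟩, rfl⟩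
    exact ⟨d, hd1, hd2, T, hT1, hT2, rfl⟩
  · rintro ⟨d, hd1, hd2, T, hT1, hT2, rfl⟩
    exact ⟨d, ⟨hd1, hd2⟩, T, ⟨hT1, hT2⟩, rfl⟩

lemma U5_isUDPS : IsUDPS U5 := by
  refine ⟨⟨1, by decide⟩, by decide, ?_, ?_⟩
  · intro D hD
    rw [mem_U5_iff] at hD
    obtain ⟨d, hd1, hd2, T, hT1, hT2, rfl⟩ := hD
    obtain ⟨a, b, hab, rfl⟩ := Finset.card_eq_two.mp hT2
    refine ⟨hd2, hd1, {a}, {b}, by simpa using hab, ?_, ?_, ?_, ?_⟩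
    · simp [Finset.image_insert]
    · rw [← Finset.insert_eq]
      rw [Finset.card_insert_of_notMem (by simpa using hab)]
      simp
    · rw [← Finset.insert_eq]; exact hT1
    · simp [Finset.singleton_inter_of_notMem, hab]
  · intro D₁ h₁ D₂ h₂ hfst huni
    rw [mem_U5_iff] at h₁ h₂
    obtain ⟨d₁, _, _, T₁, _, _, rfl⟩ := h₁
    obtain ⟨d₂, _, _, T₂, _, _, rfl⟩ := h₂
    simp only at hfst
    rw [unionOf_image_singleton, unionOf_image_singleton] at huni
    simp [hfst, huni]

/-- Lemma 1 (non-surjectivity): some unit div point set is not the image under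
`F_udps` of any div point set of at least 4 points. -/
theorem stmt_3 :
    ∃ U : PreDPS, IsUDPS U ∧
      ∀ X : PreDPS, IsDPS X → 4 ≤ X.1.card → Fudps X ≠ U := by
  refine ⟨U5, U5_isUDPS, ?_⟩
  intro X hX _ hF
  obtain ⟨hne, hcard, hdiv, _⟩ := hX
  have hX1 : X.1 = Finset.Icc 1 5 := congrArg Prod.fst hF
  have hX1card : X.1.card = 5 := by rw [hX1]; decide
  -- X.2 is nonempty
  have hX2ne : X.2.Nonempty := by
    rw [← Finset.card_pos, hcard, hX1card]; decide
  obtain ⟨D, hD⟩ := hX2ne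
  obtain ⟨hDcard, hDsub, A, B, hAB, hδ, hABu, hABi⟩ := hdiv D hD
  -- some div has at least two elements
  have hsum : (X.1 \ D.1).card = 3 := by
    rw [Finset.card_sdiff_of_subset hDsub, hX1card, hDcard]
  have hABdisj : Disjoint A B := Finset.disjoint_iff_inter_eq_empty.mpr hABi
  have hcards : A.card + B.card = 3 := by
    rw [← Finset.card_union_of_disjoint hABdisj, hABu, hsum]
  have hbig : 2 ≤ A.card ∨ 2 ≤ B.card := by omega
  obtain ⟨C, hCA, hCcard⟩ : ∃ C, (C ⊆ A ∨ C ⊆ B) ∧ C.card = 2 := by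
    rcases hbig with h | h
    · obtain ⟨C, hC1, hC2⟩ := Finset.exists_subset_card_eq h
      exact ⟨C, Or.inl hC1, hC2⟩
    · obtain ⟨C, hC1, hC2⟩ := Finset.exists_subset_card_eq h
      exact ⟨C, Or.inr hC1, hC2⟩
  have hCsub : C ⊆ X.1 \ D.1 := by
    rw [← hABu]
    rcases hCA with h | h
    · exact h.trans Finset.subset_union_left
    · exact h.trans Finset.subset_union_right
  -- the unit dividon (D.1, {C, ∅}) is in (Fudps X).2
  have hmem : (D.1, ({C, ∅} : Finset (Finset ℕ))) ∈ (Fudps X).2 := by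
    simp only [Fudps, Finset.mem_biUnion, Finset.mem_image]
    refine ⟨D, hD, C, Finset.mem_powersetCard.mpr ⟨hCsub, hCcard⟩, ?_⟩
    have : ∃ dv ∈ D.2, C ⊆ dv := by
      rw [hδ]
      rcases hCA with h | h
      · exact ⟨A, by simp, h⟩
      · exact ⟨B, by simp, h⟩
    simp [this]
  rw [hF, mem_U5_iff] at hmem
  obtain ⟨d, _, _, T, _, hT2, heq⟩ := hmem
  have h2 : ({C, ∅} : Finset (Finset ℕ)) = T.image fun a => ({a} : Finset ℕ) := by
    simpa using congrArg Prod.snd heq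
  have hempty : (∅ : Finset ℕ) ∈ T.image fun a => ({a} : Finset ℕ) := by
    rw [← h2]; simp
  simp only [Finset.mem_image] at hempty
  obtain ⟨a, _, ha⟩ := hempty
  exact Finset.singleton_ne_empty a ha
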